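/- Let Θ₁, Θ₂ ⊆ I be special and let τ ∈ ^{Θ₁∪Θ₁⊥}W^{Θ₂∪Θ₂⊥} (a minimal length double coset representative of W_{Θ₁∪Θ₁⊥}\W/W_{Θ₂∪Θ₂⊥}). Then the set Θ := Θ₁ ∪ Θ₂ ∪ red(τ) is a special subset of I; in particular τ ∈ W_{Θ^∞}. -/

import Mathlib

open scoped Pointwise

/-- A realization over `ℝ` of a generalized Cartan matrix `A = (a_{ij})_{i,j ∈ I}`.
The space `E` plays the role of `h_ℝ*`; `coroot i` is the linear functional
`λ ↦ λ(h_i)` of evaluation against the simple coroot `h_i`, and `root i` is the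
simple root `α_i ∈ h_ℝ*`. -/
structure GCMRealization where
  I : Type
  E : Type
  [fintypeI : Fintype I]
  [decEqI : DecidableEq I]
  [addCommGroupE : AddCommGroup E]
  [moduleE : Module ℝ E]
  [finiteDimensionalE : FiniteDimensional ℝ E]
  A : I → I → ℤ
  diag : ∀ i, A i i = 2
  offDiag_nonpos : ∀ i j, i ≠ j → A i j ≤ 0
  zero_iff : ∀ i j, A i j = 0 ↔ A j i = 0
  root : I → E
  coroot : I → E →ₗ[ℝ] ℝ
  root_indep : LinearIndependent ℝ root
  coroot_indep : LinearIndependent ℝ coroot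
  pairing : ∀ i j, coroot i (root j) = (A i j : ℝ)

attribute [instance] GCMRealization.fintypeI GCMRealization.decEqI
  GCMRealization.addCommGroupE GCMRealization.moduleE GCMRealization.finiteDimensionalE

namespace GCMRealization

variable (S : GCMRealization)

/-- The group of linear automorphisms of `E`, realized as units of the
endomorphism monoid. -/
abbrev U := (S.E →ₗ[ℝ] S.E)ˣ

/-- Application of a linear automorphism to a vector. -/
def ap (σ : S.U) (x : S.E) : S.E := σ.val x

/-- The simple reflection `σ_i : λ ↦ λ - λ(h_i) α_i` as a linear endomorphism. -/
def sMap (i : S.I) : S.E →ₗ[ℝ] S.E := LinearMap.id - (S.coroot i).smulRight (S.root i)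

lemma sMap_apply (i : S.I) (x : S.E) : S.sMap i x = x - S.coroot i x • S.root i := rfl

lemma sMap_sq (i : S.I) : S.sMap i * S.sMap i = 1 := by
  have h2 : S.coroot i (S.root i) = 2 := by
    rw [S.pairing, S.diag]; norm_num
  ext x
  rw [Module.End.mul_apply, Module.End.one_apply, sMap_apply, sMap_apply, map_sub, map_smul, h2,
    smul_eq_mul]
  have h3 : S.coroot i x - S.coroot i x * 2 = -(S.coroot i x) := by ring
  rw [h3, neg_smul, sub_neg_eq_add]
  abel

/-- The simple reflection `σ_i` as a linear automorphism. -/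
def sUnit (i : S.I) : S.U := ⟨S.sMap i, S.sMap i, S.sMap_sq i, S.sMap_sq i⟩

/-- The Weyl group `W`, generated by the simple reflections. -/
def W : Subgroup S.U := Subgroup.closure (Set.range S.sUnit)

/-- The standard parabolic subgroup `W_J`, generated by `{σ_i : i ∈ J}`. -/
def WJ (J : Set S.I) : Subgroup S.U := Subgroup.closure (S.sUnit '' J)

lemma WJ_le_W (J : Set S.I) : S.WJ J ≤ S.W :=
  Subgroup.closure_mono (Set.image_subset_range _ _)

lemma ap_mul (σ τ : S.U) (x : S.E) : S.ap (σ * τ) x = S.ap σ (S.ap τ x) := rfl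

lemma ap_one (x : S.E) : S.ap 1 x = x := rfl

/-- The closed fundamental chamber `C̄`. -/
def chamber : Set S.E := { x | ∀ i, 0 ≤ S.coroot i x }

/-- The Tits cone `X = W ⬝ C̄`. -/
def titsCone : Set S.E := { x | ∃ σ ∈ S.W, ∃ y ∈ S.chamber, x = S.ap σ y }

/-- The open facet `F_J` of type `J`. -/
def openFacet (J : Set S.I) : Set S.E :=
  { x | (∀ i ∈ J, S.coroot i x = 0) ∧ ∀ i, i ∉ J → 0 < S.coroot i x }

/-- The closed facet `F̄_J` of type `J`. -/
def closedFacet (J : Set S.I) : Set S.E :=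
  { x | (∀ i ∈ J, S.coroot i x = 0) ∧ ∀ i, i ∉ J → 0 ≤ S.coroot i x }

/-- A face of the Tits cone, in the sense of convex geometry: an extreme convex
subcone of the convex cone `X`. -/
def IsFace (F : Set S.E) : Prop :=
  Convex ℝ F ∧ (∀ c : ℝ, 0 ≤ c → ∀ x ∈ F, c • x ∈ F) ∧ IsExtreme ℝ S.titsCone F

/-- The set `Fa(X)` of faces of the Tits cone. -/
def faces : Set (Set S.E) := { F | S.IsFace F }

lemma faces_subset {F : Set S.E} (h : F ∈ S.faces) : F ⊆ S.titsCone := h.2.2.1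

/-- Two indices of `Θ` are linked if they are joined by an edge of the Coxeter
diagram of the submatrix `A_Θ`. -/
def connRel (Θ : Set S.I) (i j : S.I) : Prop := i ∈ Θ ∧ j ∈ Θ ∧ S.A i j ≠ 0

/-- The index set of the connected component of `i` in the submatrix `A_Θ`. -/
def component (Θ : Set S.I) (i : S.I) : Set S.I :=
  { j | j ∈ Θ ∧ Relation.ReflTransGen (S.connRel Θ) i j }

/-- A subset `K ⊆ I` is of finite type iff its Weyl group `W_K` is finite. -/
def finType (K : Set S.I) : Prop := Finite (S.WJ K)

/-- `Θ^∞`: the union of the index sets of the connected components of `A_Θ` of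
non-finite type. -/
def infpart (Θ : Set S.I) : Set S.I := { i | i ∈ Θ ∧ ¬ S.finType (S.component Θ i) }

/-- `Θ⁰`: the union of the index sets of the connected components of `A_Θ` of
finite type. -/
def finpart (Θ : Set S.I) : Set S.I := { i | i ∈ Θ ∧ S.finType (S.component Θ i) }

/-- `Θ` is special if `Θ = Θ^∞`. -/
def special (Θ : Set S.I) : Prop := S.infpart Θ = Θ

/-- `J⊥ = { i ∈ I : a_{ij} = 0 for all j ∈ J }`. -/
def perp (J : Set S.I) : Set S.I := { i | ∀ j ∈ J, S.A i j = 0 }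

/-- The special face `R(Θ) = W_{Θ⊥} ⬝ F̄_Θ` of the Tits cone. -/
def faceR (Θ : Set S.I) : Set S.E :=
  { x | ∃ σ ∈ S.WJ (S.perp Θ), ∃ y ∈ S.closedFacet Θ, x = S.ap σ y }

lemma closedFacet_subset_chamber (J : Set S.I) : S.closedFacet J ⊆ S.chamber := by
  intro x hx i
  by_cases hi : i ∈ J
  · exact le_of_eq (hx.1 i hi).symm
  · exact hx.2 i hi

lemma chamber_subset_titsCone : S.chamber ⊆ S.titsCone :=
  fun x hx => ⟨1, one_mem _, x, hx, rfl⟩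

lemma ap_mem_titsCone {σ : S.U} (hσ : σ ∈ S.W) {x : S.E} (hx : x ∈ S.titsCone) :
    S.ap σ x ∈ S.titsCone := by
  obtain ⟨τ, hτ, y, hy, rfl⟩ := hx
  exact ⟨σ * τ, mul_mem hσ hτ, y, hy, rfl⟩

lemma faceR_subset (Θ : Set S.I) : S.faceR Θ ⊆ S.titsCone := by
  rintro x ⟨σ, hσ, y, hy, rfl⟩
  exact S.ap_mem_titsCone (S.WJ_le_W _ hσ)
    (S.chamber_subset_titsCone (S.closedFacet_subset_chamber Θ hy))

/-- The product of the word `l` in the simple reflections. -/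
def wordProd (l : List S.I) : S.U := (l.map S.sUnit).prod

/-- The length of an element of the Weyl group: the length of a shortest
expression as a product of simple reflections. -/
noncomputable def length (σ : S.U) : ℕ :=
  sInf { n | ∃ l : List S.I, l.length = n ∧ S.wordProd l = σ }

/-- `l` is a reduced expression of `σ`. -/
def IsReduced (l : List S.I) (σ : S.U) : Prop :=
  S.wordProd l = σ ∧ l.length = S.length σ

/-- `red σ`: the set of indices of simple reflections occurring in a reduced
expression of `σ` (by a result of J. Tits this set does not depend on the
choice of reduced expression). -/
def red (σ : S.U) : Set S.I := { i | ∃ l : List S.I, S.IsReduced l σ ∧ i ∈ l }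

/-- `W^J`: the minimal length representatives of the cosets `W/W_J`. -/
def minRight (J : Set S.I) : Set S.U :=
  { σ | σ ∈ S.W ∧ ∀ τ ∈ S.WJ J, S.length σ ≤ S.length (σ * τ) }

/-- `^K W`: the minimal length representatives of the cosets `W_K\W`. -/
def minLeft (K : Set S.I) : Set S.U :=
  { σ | σ ∈ S.W ∧ ∀ κ ∈ S.WJ K, S.length σ ≤ S.length (κ * σ) }

/-- `^K W^J`: the minimal length representatives of the double cosets
`W_K\W/W_J`. -/
def minDouble (K J : Set S.I) : Set S.U :=
  { σ | σ ∈ S.W ∧ ∀ κ ∈ S.WJ K, ∀ τ ∈ S.WJ J, S.length σ ≤ S.length (κ * σ * τ) }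

/-- `(W_L)^{J'}`: the minimal length representatives within `W_L` of the cosets
`W_L/W_{J'}`. -/
def minRightIn (L J' : Set S.I) : Set S.U :=
  { σ | σ ∈ S.WJ L ∧ ∀ τ ∈ S.WJ J', S.length σ ≤ S.length (σ * τ) }

/-- Pairs `(σ, R)` with `σ ∈ W` and `R ⊆ X`, the raw material for the face
monoid: `(σ, R)` represents the element `σ ε(R)`. -/
structure PreHat (S : GCMRealization) where
  w : S.W
  carrier : Set S.E
  subX : carrier ⊆ S.titsCone

lemma PreHat.ext' : ∀ {p q : S.PreHat}, p.w = q.w → p.carrier = q.carrier → p = q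
  | ⟨_, _, _⟩, ⟨_, _, _⟩, h1, h2 => by cases h1; cases h2; rfl

instance : One S.PreHat := ⟨⟨1, S.titsCone, subset_rfl⟩⟩

/-- The semidirect product multiplication `(σ, R)(τ, T) = (στ, τ⁻¹R ∩ T)`. -/
instance : Mul S.PreHat :=
  ⟨fun p q => ⟨p.w * q.w, S.ap ↑q.w ⁻¹' p.carrier ∩ q.carrier,
    fun _ hx => q.subX hx.2⟩⟩

lemma PreHat.mul_w (p q : S.PreHat) : (p * q).w = p.w * q.w := rfl

lemma PreHat.mul_carrier (p q : S.PreHat) :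
    (p * q).carrier = S.ap ↑q.w ⁻¹' p.carrier ∩ q.carrier := rfl

lemma PreHat.one_w : (1 : S.PreHat).w = 1 := rfl

lemma PreHat.one_carrier : (1 : S.PreHat).carrier = S.titsCone := rfl

instance : Monoid S.PreHat where
  mul_assoc p q r := by
    refine PreHat.ext' S (mul_assoc _ _ _) ?_
    ext x
    simp only [PreHat.mul_carrier, PreHat.mul_w, Set.mem_inter_iff, Set.mem_preimage,
      Subgroup.coe_mul, S.ap_mul]
    tauto
  one_mul p := by
    refine PreHat.ext' S (one_mul _) ?_
    ext x
    simp only [PreHat.mul_carrier, PreHat.one_carrier, Set.mem_inter_iff, Set.mem_preimage]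
    exact ⟨fun h => h.2, fun h => ⟨S.ap_mem_titsCone p.w.2 (p.subX h), h⟩⟩
  mul_one p := by
    refine PreHat.ext' S (mul_one _) ?_
    ext x
    simp only [PreHat.mul_carrier, PreHat.one_carrier, Set.mem_inter_iff, Set.mem_preimage,
      OneMemClass.coe_one, S.ap_one]
    exact ⟨fun h => h.1, fun h => ⟨h, p.subX h⟩⟩

/-- The congruence relation `σ ε(R) = σ' ε(R') ⟺ R = R'` and `σ⁻¹σ'` fixes `R`
pointwise. -/
def hatCon : Con S.PreHat where
  r p q := p.carrier = q.carrier ∧ ∀ x ∈ p.carrier, S.ap ↑p.w x = S.ap ↑q.w x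
  iseqv :=
    { refl := fun p => ⟨rfl, fun _ _ => rfl⟩
      symm := fun {p q} h => ⟨h.1.symm, fun x hx => (h.2 x (h.1 ▸ hx)).symm⟩
      trans := fun {p q r} h h' =>
        ⟨h.1.trans h'.1, fun x hx => (h.2 x hx).trans (h'.2 x (h.1 ▸ hx))⟩ }
  mul' := by
    rintro p p' q q' ⟨hc, hw⟩ ⟨hc', hw'⟩
    constructor
    · ext x
      simp only [PreHat.mul_carrier, Set.mem_inter_iff, Set.mem_preimage]
      constructor
      · rintro ⟨h1, h2⟩
        exact ⟨by rw [← hw' x h2, ← hc]; exact h1, hc' ▸ h2⟩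
      · rintro ⟨h1, h2⟩
        have h2' : x ∈ q.carrier := hc' ▸ h2
        exact ⟨by rw [hc, hw' x h2']; exact h1, h2'⟩
    · rintro x ⟨h1, h2⟩
      simp only [PreHat.mul_w, Subgroup.coe_mul, S.ap_mul]
      rw [hw _ h1, hw' x h2]

/-- The monoid in which the face monoid `Ŵ` lives: the quotient of the
semidirect product by the congruence. -/
def FM := S.hatCon.Quotient

noncomputable instance : Monoid S.FM := by unfold FM; infer_instance

/-- The class of the pair `(σ, R)` in the quotient. -/
def fmk (p : S.PreHat) : S.FM := S.hatCon.mk' p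

/-- The element `σ = σ ε(X)` of the face monoid. -/
def wEl (σ : S.W) : S.FM := S.fmk ⟨σ, S.titsCone, subset_rfl⟩

/-- The idempotent `ε(R)` for `R ⊆ X`. -/
def eps (R : Set S.E) (h : R ⊆ S.titsCone) : S.FM := S.fmk ⟨1, R, h⟩

/-- The idempotent `ε(R(Θ))`. -/
def faceEl (Θ : Set S.I) : S.FM := S.eps (S.faceR Θ) (S.faceR_subset Θ)

/-- The element `σ ε(R)` of the face monoid. -/
def genEl (σ : S.W) (R : Set S.E) (h : R ⊆ S.titsCone) : S.FM := S.fmk ⟨σ, R, h⟩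

/-- The image of the Weyl group `W` in the face monoid. -/
def Wset : Set S.FM := Set.range S.wEl

/-- The set `E = {ε(R) : R ∈ Fa(X)}` of idempotents of the face monoid. -/
def Eset : Set S.FM := { x | ∃ R, ∃ h : R ∈ S.faces, x = S.eps R (S.faces_subset h) }

/-- The face monoid `Ŵ` associated to the Weyl group `W`: the submonoid
generated by `W` and the idempotents `ε(R)`, `R` a face of the Tits cone;
its elements are exactly the `σ ε(R)` with `σ ∈ W` and `R ∈ Fa(X)`. -/
noncomputable def hatW : Submonoid S.FM := Submonoid.closure (S.Wset ∪ S.Eset)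

/-- The image of the parabolic subgroup `W_J` in the face monoid. -/
def WJset (J : Set S.I) : Set S.FM :=
  { x | ∃ σ, ∃ h : σ ∈ S.WJ J, x = S.wEl ⟨σ, S.WJ_le_W J h⟩ }

/-- The set `E_J = {ε(R) : R ∈ Fa(X), R ⊇ R(J^∞)}`. -/
def EJset (J : Set S.I) : Set S.FM :=
  { x | ∃ R, ∃ h : R ∈ S.faces, S.faceR (S.infpart J) ⊆ R ∧ x = S.eps R (S.faces_subset h) }

/-- The standard parabolic submonoid `Ŵ_J = W_J ⬝ E_J` of the face monoid. -/
def hatWJ (J : Set S.I) : Set S.FM := S.WJset J * S.EJset J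

/-- The coset `σ W_J`, an element of the Coxeter complex. -/
def coset (σ : S.U) (J : Set S.I) : Set S.U := { τ | ∃ w ∈ S.WJ J, τ = σ * w }

/-- The Coxeter complex `C = {σ W_J : σ ∈ W, J ⊆ I}`, partially ordered by
reverse inclusion. -/
def Cox : Set (Set S.U) := { c | ∃ σ ∈ S.W, ∃ J : Set S.I, c = S.coset σ J }

/-- Left translation, giving the action of `W` on the Coxeter complex. -/
def lmul (σ : S.U) (c : Set S.U) : Set S.U := (fun τ => σ * τ) '' c

/-- `W_Θ↓ = {V ∈ C : V ≤ W_Θ} = {V ∈ C : V ⊇ W_Θ}`. -/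
def downW (Θ : Set S.I) : Set (Set S.U) := { V | V ∈ S.Cox ∧ S.coset 1 Θ ⊆ V }

/-- The set of cosets `W_{Θ⊥} ⬝ (W_Θ↓)`. -/
def dSet (Θ : Set S.I) : Set (Set S.U) :=
  { c | ∃ a ∈ S.WJ (S.perp Θ), ∃ V ∈ S.downW Θ, c = S.lmul a V }

end GCMRealization

namespace GCMRealization

section Aux

variable (S : GCMRealization)

lemma wordProd_nil : S.wordProd [] = 1 := rfl

lemma wordProd_cons (a : S.I) (l : List S.I) :
    S.wordProd (a :: l) = S.sUnit a * S.wordProd l := by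
  simp [wordProd]

lemma wordProd_append (l m : List S.I) :
    S.wordProd (l ++ m) = S.wordProd l * S.wordProd m := by
  simp [wordProd]

lemma sUnit_mul_self (a : S.I) : S.sUnit a * S.sUnit a = 1 :=
  Units.ext (S.sMap_sq a)

lemma sUnit_inv (a : S.I) : (S.sUnit a)⁻¹ = S.sUnit a :=
  inv_eq_of_mul_eq_one_right (S.sUnit_mul_self a)

lemma wordProd_reverse (l : List S.I) : S.wordProd l.reverse = (S.wordProd l)⁻¹ := by
  induction l with
  | nil => simp [wordProd]
  | cons a l ih =>
    have h1 : S.wordProd [a] = S.sUnit a := by simp [wordProd]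
    rw [List.reverse_cons, wordProd_append, ih, h1, wordProd_cons, mul_inv_rev, S.sUnit_inv]

lemma sUnit_mem_WJ {J : Set S.I} {i : S.I} (hi : i ∈ J) : S.sUnit i ∈ S.WJ J :=
  Subgroup.subset_closure ⟨i, hi, rfl⟩

lemma wordProd_mem {J : Set S.I} {l : List S.I} (h : ∀ a ∈ l, a ∈ J) :
    S.wordProd l ∈ S.WJ J := by
  apply Subgroup.list_prod_mem
  intro x hx
  simp only [List.mem_map] at hx
  obtain ⟨a, ha, rfl⟩ := hx
  exact S.sUnit_mem_WJ (h a ha)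

lemma sUnit_commute {i j : S.I} (hij : S.A i j = 0) :
    Commute (S.sUnit i) (S.sUnit j) := by
  have hji : S.A j i = 0 := (S.zero_iff i j).mp hij
  have hc : S.coroot i (S.root j) = 0 := by rw [S.pairing, hij]; norm_num
  have hc' : S.coroot j (S.root i) = 0 := by rw [S.pairing, hji]; norm_num
  refine Units.ext ?_
  show S.sMap i * S.sMap j = S.sMap j * S.sMap i
  ext x
  simp only [Module.End.mul_apply, sMap_apply, map_sub, map_smul, hc, hc', smul_eq_mul,
    mul_zero, zero_smul, sub_zero, smul_zero]
  abel

lemma wordProd_filter_split (p : S.I → Bool) (l : List S.I)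
    (hcomm : ∀ a ∈ l, ∀ b ∈ l, p a = true → p b = false →
      Commute (S.sUnit a) (S.sUnit b)) :
    S.wordProd l = S.wordProd (l.filter p) * S.wordProd (l.filter (fun j => ! p j)) := by
  induction l with
  | nil => simp [wordProd]
  | cons a l ih =>
    have ih' := ih (fun x hx y hy => hcomm x (List.mem_cons_of_mem _ hx) y
      (List.mem_cons_of_mem _ hy))
    by_cases ha : p a = true
    · rw [List.filter_cons_of_pos ha, List.filter_cons_of_neg (by simp [ha]),
        wordProd_cons, wordProd_cons, ih', mul_assoc]
    · have ha' : p a = false := by simpa using ha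
      have hca : Commute (S.sUnit a) (S.wordProd (l.filter p)) := by
        apply Commute.list_prod_right
        intro y hy
        simp only [List.mem_map, List.mem_filter] at hy
        obtain ⟨b, ⟨hbl, hpb⟩, rfl⟩ := hy
        exact (hcomm b (List.mem_cons_of_mem _ hbl) a List.mem_cons_self hpb ha').symm
      rw [List.filter_cons_of_neg (by simpa using ha), List.filter_cons_of_pos (by simp [ha']),
        wordProd_cons, wordProd_cons, ih', ← mul_assoc, hca.eq, mul_assoc]

lemma exists_word {σ : S.U} (h : σ ∈ S.W) : ∃ l : List S.I, S.wordProd l = σ := by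
  induction h using Subgroup.closure_induction with
  | mem x hx =>
    obtain ⟨i, rfl⟩ := hx
    exact ⟨[i], by simp [wordProd]⟩
  | one => exact ⟨[], rfl⟩
  | mul x y _ _ ihx ihy =>
    obtain ⟨l, rfl⟩ := ihx
    obtain ⟨m, rfl⟩ := ihy
    exact ⟨l ++ m, S.wordProd_append l m⟩
  | inv x _ ihx =>
    obtain ⟨l, rfl⟩ := ihx
    exact ⟨l.reverse, S.wordProd_reverse l⟩

lemma exists_reduced {σ : S.U} (h : σ ∈ S.W) : ∃ l : List S.I, S.IsReduced l σ := by
  obtain ⟨l, hl⟩ := S.exists_word h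
  have hne : {n | ∃ l : List S.I, l.length = n ∧ S.wordProd l = σ}.Nonempty :=
    ⟨l.length, l, rfl, hl⟩
  obtain ⟨l', h1, h2⟩ := Nat.sInf_mem hne
  exact ⟨l', h2, h1⟩

lemma length_le_of_word {σ : S.U} {l : List S.I} (h : S.wordProd l = σ) :
    S.length σ ≤ l.length :=
  Nat.sInf_le ⟨l, rfl, h⟩

lemma connRel_symm {Θ : Set S.I} : Symmetric (S.connRel Θ) := fun _ _ h =>
  ⟨h.2.1, h.1, fun hz => h.2.2 ((S.zero_iff _ _).mp hz)⟩

lemma component_eq {Θ : Set S.I} {i j : S.I} (hj : j ∈ S.component Θ i) :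
    S.component Θ j = S.component Θ i := by
  ext k
  simp only [component, Set.mem_setOf_eq]
  haveI : Std.Symm (S.connRel Θ) := ⟨fun a b h => S.connRel_symm h⟩
  have hsym := fun {a b : S.I} (h : Relation.ReflTransGen (S.connRel Θ) a b) =>
    (show Std.Symm (Relation.ReflTransGen (S.connRel Θ)) from Relation.ReflTransGen.symmetric).symm a b h
  exact ⟨fun hk => ⟨hk.1, hj.2.trans hk.2⟩, fun hk => ⟨hk.1, (hsym hj.2).trans hk.2⟩⟩

lemma component_mono {Θ Θ' : Set S.I} (h : Θ ⊆ Θ') (j : S.I) :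
    S.component Θ j ⊆ S.component Θ' j := fun _ hk =>
  ⟨h hk.1, (show Relation.ReflTransGen (S.connRel Θ) ≤ Relation.ReflTransGen (S.connRel Θ') from
    Relation.ReflTransGen.mono (by intro _ _ hab; exact ⟨h hab.1, h hab.2.1, hab.2.2⟩)) _ _ hk.2⟩

lemma finType_mono {K K' : Set S.I} (h : K ⊆ K') (hf : S.finType K') : S.finType K := by
  have hle : S.WJ K ≤ S.WJ K' := Subgroup.closure_mono (Set.image_mono h)
  have : Finite (S.WJ K') := hf
  show Finite (S.WJ K)
  exact Finite.of_injective (Subgroup.inclusion hle) (Subgroup.inclusion_injective hle)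

end Aux

/-- For special `Θ₁, Θ₂ ⊆ I` and a minimal length double coset
representative `τ ∈ ^{Θ₁∪Θ₁⊥}W^{Θ₂∪Θ₂⊥}`, the set `Θ = Θ₁ ∪ Θ₂ ∪ red(τ)` is
special; in particular `τ ∈ W_{Θ^∞}`. -/
theorem union_red_special (S : GCMRealization) (Θ₁ Θ₂ : Set S.I)
    (h1 : S.special Θ₁) (h2 : S.special Θ₂) (τ : S.U)
    (hτ : τ ∈ S.minDouble (Θ₁ ∪ S.perp Θ₁) (Θ₂ ∪ S.perp Θ₂)) :
    S.special (Θ₁ ∪ Θ₂ ∪ S.red τ) ∧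
    τ ∈ S.WJ (S.infpart (Θ₁ ∪ Θ₂ ∪ S.red τ)) := by
  classical
  set Θ : Set S.I := Θ₁ ∪ Θ₂ ∪ S.red τ with hΘ
  -- every connected component of Θ is of non-finite type
  have key : ∀ i ∈ Θ, ¬ S.finType (S.component Θ i) := by
    intro i hiΘ
    by_cases hmeet : ∃ j ∈ S.component Θ i, j ∈ Θ₁ ∪ Θ₂
    · -- the component meets Θ₁ ∪ Θ₂, hence contains an infinite-type component
      obtain ⟨j, hjC, hj12⟩ := hmeet
      intro hfin
      rcases hj12 with hj1 | hj2
      · have h1' : S.infpart Θ₁ = Θ₁ := h1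
        have hjinf : j ∈ S.infpart Θ₁ := by rw [h1']; exact hj1
        refine hjinf.2 (S.finType_mono ?_ hfin)
        calc S.component Θ₁ j ⊆ S.component Θ j :=
              S.component_mono (fun k hk => Or.inl (Or.inl hk)) j
          _ = S.component Θ i := S.component_eq hjC
      · have h2' : S.infpart Θ₂ = Θ₂ := h2
        have hjinf : j ∈ S.infpart Θ₂ := by rw [h2']; exact hj2
        refine hjinf.2 (S.finType_mono ?_ hfin)
        calc S.component Θ₂ j ⊆ S.component Θ j :=
              S.component_mono (fun k hk => Or.inl (Or.inr hk)) j
          _ = S.component Θ i := S.component_eq hjC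
    · -- the component is disjoint from Θ₁ ∪ Θ₂; derive a contradiction with minimality
      exfalso
      push_neg at hmeet
      set C : Set S.I := S.component Θ i with hC
      have hiC : i ∈ C := ⟨hiΘ, Relation.ReflTransGen.refl⟩
      -- i ∈ red τ
      have hired : i ∈ S.red τ := by
        rcases hiΘ with (h' | h') | h'
        · exact absurd (Or.inl h') (hmeet i hiC)
        · exact absurd (Or.inr h') (hmeet i hiC)
        · exact h'
      obtain ⟨l, hlred, hil⟩ := hired
      -- letters of l are in Θ
      have hlΘ : ∀ a ∈ l, a ∈ Θ := fun a ha => Or.inr ⟨l, hlred, ha⟩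
      -- no edges leave C inside Θ
      have hnoedge : ∀ c ∈ C, ∀ j ∈ Θ, j ∉ C → S.A c j = 0 := by
        intro c hc j hjΘ hjC
        by_contra hne
        have hjc : j ∈ S.component Θ c := ⟨hjΘ, Relation.ReflTransGen.single ⟨hc.1, hjΘ, hne⟩⟩
        rw [S.component_eq hc] at hjc
        exact hjC hjc
      -- C ⊆ Θ₁⊥
      have hCperp : ∀ c ∈ C, c ∈ S.perp Θ₁ := by
        intro c hc j hj1
        have hjΘ : j ∈ Θ := Or.inl (Or.inl hj1)
        have hjC : j ∉ C := fun hjC => hmeet j hjC (Or.inl hj1)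
        exact hnoedge c hc j hjΘ hjC
      -- split the reduced word l according to membership in C
      have hcomm : ∀ a ∈ l, ∀ b ∈ l, decide (a ∈ C) = true → decide (b ∈ C) = false →
          Commute (S.sUnit a) (S.sUnit b) := by
        intro a ha b hb hpa hpb
        have haC : a ∈ C := of_decide_eq_true hpa
        have hbC : b ∉ C := of_decide_eq_false hpb
        exact S.sUnit_commute (hnoedge a haC b (hlΘ b hb) hbC)
      have hsplit := S.wordProd_filter_split (fun j => decide (j ∈ C)) l hcomm
      set lC := l.filter (fun j => decide (j ∈ C)) with hlC
      set lN := l.filter (fun j => ! decide (j ∈ C)) with hlN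
      -- the C-part lies in W_{Θ₁ ∪ Θ₁⊥}
      have hτC : S.wordProd lC ∈ S.WJ (Θ₁ ∪ S.perp Θ₁) := by
        apply S.wordProd_mem
        intro a ha
        rw [hlC, List.mem_filter] at ha
        exact Or.inr (hCperp a (of_decide_eq_true ha.2))
      -- minimality of τ
      have hmin := hτ.2 (S.wordProd lC)⁻¹ (inv_mem hτC) 1 (one_mem _)
      rw [mul_one] at hmin
      have hτeq : (S.wordProd lC)⁻¹ * τ = S.wordProd lN := by
        rw [← hlred.1, hsplit]; group
      rw [hτeq] at hmin
      have hlen : S.length (S.wordProd lN) ≤ lN.length := S.length_le_of_word rfl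
      -- lC is nonempty since i ∈ l and i ∈ C
      have hilC : i ∈ lC := by
        rw [hlC, List.mem_filter]
        exact ⟨hil, decide_eq_true hiC⟩
      have hpos : 0 < lC.length := List.length_pos_of_mem hilC
      have hsum : l.length = lC.length + lN.length :=
        List.length_eq_length_filter_add (fun j => decide (j ∈ C))
      have hlt : lN.length < l.length := by omega
      have : S.length τ < S.length τ := by
        calc S.length τ ≤ S.length (S.wordProd lN) := hmin
          _ ≤ lN.length := hlen
          _ < l.length := hlt
          _ = S.length τ := hlred.2
      exact absurd this (lt_irrefl _)
  have hspec : S.special Θ := by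
    unfold special infpart
    ext j
    simp only [Set.mem_setOf_eq]
    exact ⟨fun h => h.1, fun h => ⟨h, key j h⟩⟩
  refine ⟨hspec, ?_⟩
  have hinf : S.infpart Θ = Θ := hspec
  rw [hinf]
  obtain ⟨l, hl⟩ := S.exists_reduced hτ.1
  rw [← hl.1]
  exact S.wordProd_mem (fun a ha => Or.inr ⟨l, hl, ha⟩)

end GCMRealization
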